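/- arXiv:math/0503078 — 2 statements merged into one kernel-verified Lean document; each statement's English description precedes it below -/
import Mathlib

section
/- Let I₀ be a finite interval in ℝ and let f₂, …, fₙ : I₀ → ℝ be locally Lipschitz, defining the curve C := {(x, f₂(x), …, fₙ(x)) : x ∈ I₀} (with f₁(x) = x). Let (R_C(Φ), β) be a system of resonant points near C that is locally ubiquitous with respect to a function ρ, and let Ψ be an approximating function such that Ψ(2^{t+1}) ≤ (1/2)·Ψ(2^t) for all sufficiently large t. If ∑_{t=1}^∞ Ψ(2^t)/ρ(2^t) = ∞, then the one-dimensional Lebesgue measure of Λ(R_C(Φ), β, Ψ) equals the length |I₀| of I₀. -/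
open MeasureTheory Filter Set Metric
open scoped ENNReal NNReal Topology

lemma chung_erdos (μ : Measure ℝ) (E : ℕ → Set ℝ) (hE : ∀ i, MeasurableSet (E i))
    (F : Finset ℕ) :
    (∑ i ∈ F, μ (E i)) ^ 2 ≤
      μ (⋃ i ∈ F, E i) * ∑ i ∈ F, ∑ j ∈ F, μ (E i ∩ E j) := by
  classical
  set f : ℝ → ℝ≥0∞ := fun x => ∑ i ∈ F, (E i).indicator 1 x with hf
  set U : Set ℝ := ⋃ i ∈ F, E i with hU
  have hfmeas : Measurable f := by
    apply Finset.measurable_sum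
    intro i _
    exact (measurable_one.indicator (hE i))
  have hgmeas : Measurable (U.indicator (1 : ℝ → ℝ≥0∞)) := by
    apply measurable_one.indicator
    exact MeasurableSet.biUnion F.countable_toSet (fun i _ => hE i)
  have hfg : f * U.indicator 1 = f := by
    funext x
    simp only [Pi.mul_apply]
    by_cases hx : x ∈ U
    · simp [Set.indicator_of_mem hx]
    · have : f x = 0 := by
        apply Finset.sum_eq_zero
        intro i hi
        apply Set.indicator_of_notMem
        intro hxi
        exact hx (Set.mem_biUnion hi hxi)
      simp [this]
  have hint1 : ∫⁻ x, f x ∂μ = ∑ i ∈ F, μ (E i) := by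
    rw [lintegral_finset_sum _ (fun i _ => measurable_one.indicator (hE i))]
    congr 1
    funext i
    rw [lintegral_indicator_one (hE i)]
  have hint2 : ∫⁻ x, f x ^ (2:ℝ) ∂μ = ∑ i ∈ F, ∑ j ∈ F, μ (E i ∩ E j) := by
    have : ∀ x, f x ^ (2:ℝ) = ∑ i ∈ F, ∑ j ∈ F, (E i ∩ E j).indicator 1 x := by
      intro x
      show (∑ i ∈ F, (E i).indicator 1 x) ^ (2:ℝ) = _
      rw [ENNReal.rpow_two, pow_two, Finset.sum_mul_sum]
      congr 1; funext i; congr 1; funext j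
      rw [Set.inter_indicator_one]
      rfl
    simp_rw [this]
    rw [lintegral_finset_sum _ (fun i _ => Finset.measurable_sum _
      (fun j _ => measurable_one.indicator ((hE i).inter (hE j))))]
    congr 1; funext i
    rw [lintegral_finset_sum _ (fun j _ => measurable_one.indicator ((hE i).inter (hE j)))]
    congr 1; funext j
    rw [lintegral_indicator_one ((hE i).inter (hE j))]
  have hconj : Real.HolderConjugate 2 2 := Real.HolderConjugate.two_two
  have key := ENNReal.lintegral_mul_le_Lp_mul_Lq μ hconj hfmeas.aemeasurable hgmeas.aemeasurable
  rw [hfg] at key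
  have hUind : ∫⁻ x, (U.indicator (1:ℝ→ℝ≥0∞)) x ^ (2:ℝ) ∂μ = μ U := by
    have : ∀ x, (U.indicator (1:ℝ→ℝ≥0∞)) x ^ (2:ℝ) = U.indicator 1 x := by
      intro x
      by_cases hx : x ∈ U <;> simp [Set.indicator_of_mem, Set.indicator_of_notMem, hx,
        ENNReal.rpow_two]
    simp_rw [this]
    exact lintegral_indicator_one (MeasurableSet.biUnion F.countable_toSet (fun i _ => hE i))
  rw [hUind, hint1] at key
  -- key : ∑ μ E ≤ (∫ f^2)^(1/2) * (μ U)^(1/2)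
  calc (∑ i ∈ F, μ (E i)) ^ 2
      ≤ ((∫⁻ x, f x ^ (2:ℝ) ∂μ) ^ (1/2 : ℝ) * μ U ^ (1/2 : ℝ)) ^ 2 := by
        exact pow_le_pow_left' key 2
    _ = μ U * ∑ i ∈ F, ∑ j ∈ F, μ (E i ∩ E j) := by
        have hsq : ∀ a : ℝ≥0∞, (a ^ (1/2:ℝ)) ^ 2 = a := by
          intro a
          rw [← ENNReal.rpow_natCast (a ^ (1/2:ℝ)) 2, ← ENNReal.rpow_mul]
          norm_num
        rw [mul_pow, hsq, hsq, hint2, mul_comm]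

lemma card_balls {ι : Type*} (u : Finset ι) (c : ι → ℝ) (r L : ℝ) (hr : 0 < r) (hL0 : 0 ≤ L)
    (hd : (↑u : Set ι).Pairwise (fun i j => Disjoint (closedBall (c i) r) (closedBall (c j) r)))
    (S : Set ℝ) (hS : ∀ i ∈ u, closedBall (c i) r ⊆ S) (hL : volume S ≤ ENNReal.ofReal L) :
    (u.card : ℝ) * (2 * r) ≤ L := by
  have h1 : volume (⋃ i ∈ u, closedBall (c i) r) = ∑ i ∈ u, volume (closedBall (c i) r) :=
    measure_biUnion_finset hd (fun i _ => measurableSet_closedBall)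
  have h2 : ∑ i ∈ u, volume (closedBall (c i) r) = (u.card : ℝ≥0∞) * ENNReal.ofReal (2 * r) := by
    simp [Real.volume_closedBall, Finset.sum_const, nsmul_eq_mul]
  have h3 : volume (⋃ i ∈ u, closedBall (c i) r) ≤ ENNReal.ofReal L :=
    le_trans (measure_mono (Set.iUnion₂_subset hS)) hL
  rw [h1, h2] at h3
  have h4 : ENNReal.ofReal ((u.card : ℝ) * (2 * r)) ≤ ENNReal.ofReal L := by
    rw [ENNReal.ofReal_mul (by positivity), ENNReal.ofReal_natCast]
    exact h3
  exact (ENNReal.ofReal_le_ofReal_iff hL0).mp h4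

lemma ball_inter_Icc_vol (c ψ a b : ℝ) (hc : c ∈ Icc a b) (hψ : 0 < ψ) :
    ENNReal.ofReal (min ψ (b - a)) ≤ volume (Ioo (c - ψ) (c + ψ) ∩ Icc a b) := by
  have hsub : Ioo (max (c - ψ) a) (min (c + ψ) b) ⊆ Ioo (c - ψ) (c + ψ) ∩ Icc a b := by
    intro x hx
    obtain ⟨h1, h2⟩ := hx
    constructor
    · exact ⟨lt_of_le_of_lt (le_max_left _ _) h1, lt_of_lt_of_le h2 (min_le_left _ _)⟩
    · exact ⟨le_of_lt (lt_of_le_of_lt (le_max_right _ _) h1),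
        le_of_lt (lt_of_lt_of_le h2 (min_le_right _ _))⟩
  refine le_trans ?_ (measure_mono hsub)
  rw [Real.volume_Ioo]
  apply ENNReal.ofReal_le_ofReal
  rcases min_cases (c + ψ) b with ⟨e1, i1⟩ | ⟨e1, i1⟩ <;>
    rcases max_cases (c - ψ) a with ⟨e2, i2⟩ | ⟨e2, i2⟩ <;>
    rcases min_cases ψ (b - a) with ⟨e3, i3⟩ | ⟨e3, i3⟩ <;>
    rw [e1, e2, e3] <;> linarith [hc.1, hc.2]

section Psi
variable (Ψ : ℝ → ℝ) (T : ℕ)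
  (hΨpos : ∀ t : ℝ, 0 < t → 0 < Ψ t)
  (hΨdec : ∀ s t : ℝ, 0 < s → s ≤ t → Ψ t ≤ Ψ s)
  (hhalf : ∀ t : ℕ, T ≤ t → Ψ (2 ^ (t + 1)) ≤ Ψ (2 ^ t) / 2)

include hhalf in
lemma psi_geom : ∀ s : ℕ, T ≤ s → ∀ i : ℕ, Ψ (2 ^ (s + i)) ≤ Ψ (2 ^ s) * (1 / 2) ^ i := by
  intro s hs i
  induction i with
  | zero => simp
  | succ i ih =>
    have h1 : Ψ (2 ^ (s + i + 1)) ≤ Ψ (2 ^ (s + i)) / 2 := hhalf _ (le_trans hs (Nat.le_add_right _ _))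
    calc Ψ (2 ^ (s + (i + 1))) = Ψ (2 ^ (s + i + 1)) := by ring_nf
      _ ≤ Ψ (2 ^ (s + i)) / 2 := h1
      _ ≤ Ψ (2 ^ s) * (1 / 2) ^ i / 2 := by linarith
      _ = Ψ (2 ^ s) * (1 / 2) ^ (i + 1) := by ring

include hΨpos hΨdec hhalf in
lemma psi_small : ∀ ε : ℝ, 0 < ε → ∃ m : ℕ, ∀ t : ℕ, m ≤ t → Ψ (2 ^ t) < ε := by
  intro ε hε
  have hT : 0 < Ψ (2 ^ T) := hΨpos _ (by positivity)
  obtain ⟨i, hi⟩ := exists_pow_lt_of_lt_one (show (0:ℝ) < ε / Ψ (2 ^ T) by positivity)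
    (show (1/2 : ℝ) < 1 by norm_num)
  refine ⟨T + i, fun t ht => ?_⟩
  have h1 : Ψ (2 ^ t) ≤ Ψ (2 ^ (T + i)) := by
    apply hΨdec _ _ (by positivity)
    exact pow_le_pow_right₀ (by norm_num) ht
  have h2 := psi_geom Ψ T hhalf T le_rfl i
  have h3 : Ψ (2 ^ T) * (1/2) ^ i < ε := by
    rw [lt_div_iff₀ hT] at hi
    nlinarith
  linarith

include hΨpos hΨdec hhalf in
lemma psi_tail : ∀ s : ℕ, T ≤ s → ∀ n : ℕ, ∑ t ∈ Finset.Ico (s + 1) n, Ψ (2 ^ t) ≤ Ψ (2 ^ s) := by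
  intro s hs n
  rcases le_or_gt n (s + 1) with h | h
  · rw [Finset.Ico_eq_empty (by omega)]
    simpa using le_of_lt (hΨpos _ (by positivity))
  have key : ∑ t ∈ Finset.Ico (s + 1) n, Ψ (2 ^ t)
      ≤ ∑ i ∈ Finset.range (n - (s + 1)), Ψ (2 ^ (s + 1)) * (1/2) ^ i := by
    rw [Finset.sum_Ico_eq_sum_range]
    apply Finset.sum_le_sum
    intro i _
    exact psi_geom Ψ T hhalf (s + 1) (by omega) i
  have geo : ∑ i ∈ Finset.range (n - (s+1)), (1/2:ℝ) ^ i ≤ 2 := by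
    have := geom_sum_eq (show (1/2:ℝ) ≠ 1 by norm_num) (n - (s+1))
    rw [this]
    have hp : (0:ℝ) ≤ (1/2:ℝ) ^ (n - (s+1)) := by positivity
    have h2 : ((1/2:ℝ) ^ (n - (s+1)) - 1) / (1/2 - 1) = 2 - 2 * (1/2)^(n-(s+1)) := by ring
    rw [h2]; linarith
  have hpos1 : 0 < Ψ (2 ^ (s+1)) := hΨpos _ (by positivity)
  calc ∑ t ∈ Finset.Ico (s + 1) n, Ψ (2 ^ t)
      ≤ ∑ i ∈ Finset.range (n - (s + 1)), Ψ (2 ^ (s + 1)) * (1/2) ^ i := key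
    _ = Ψ (2 ^ (s+1)) * ∑ i ∈ Finset.range (n - (s + 1)), (1/2:ℝ) ^ i := by
        rw [Finset.mul_sum]
    _ ≤ Ψ (2 ^ (s+1)) * 2 := by
        apply mul_le_mul_of_nonneg_left geo (le_of_lt hpos1)
    _ ≤ Ψ (2 ^ s) := by
        have := hhalf s hs; linarith

end Psi

lemma div_sum (g : ℕ → ℝ) (hg : ∀ t, 0 < g t) (hdiv : ¬ Summable g) :
    ∀ m : ℕ, ∀ M : ℝ, ∃ n : ℕ, m ≤ n ∧ M ≤ ∑ t ∈ Finset.Ico m n, g t := by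
  intro m M
  have h1 : Tendsto (fun n => ∑ i ∈ Finset.range n, g i) atTop atTop :=
    (not_summable_iff_tendsto_nat_atTop_of_nonneg (fun i => le_of_lt (hg i))).mp hdiv
  obtain ⟨n, hn⟩ := (tendsto_atTop.mp h1 (M + ∑ i ∈ Finset.range m, g i)).exists
  refine ⟨max m n, le_max_left _ _, ?_⟩
  have hmn : m ≤ max m n := le_max_left _ _
  have h2 : ∑ t ∈ Finset.Ico m (max m n), g t
      = ∑ i ∈ Finset.range (max m n), g i - ∑ i ∈ Finset.range m, g i := by
    rw [Finset.sum_Ico_eq_sub _ hmn]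
  have h3 : ∑ i ∈ Finset.range n, g i ≤ ∑ i ∈ Finset.range (max m n), g i := by
    apply Finset.sum_le_sum_of_subset_of_nonneg
    · exact Finset.range_subset_range.mpr (le_max_right _ _)
    · intro i _ _; exact le_of_lt (hg i)
  rw [h2]; linarith

lemma limsup_lower (E : ℕ → Set ℝ) (hmeas : ∀ t, MeasurableSet (E t)) (a b : ℝ)
    (hsub : ∀ t, E t ⊆ Icc a b) (v : ℝ≥0∞)
    (hv : ∀ m : ℕ, v ≤ volume (⋃ t, ⋃ (_ : m ≤ t), E t)) :
    v ≤ volume (⋂ m : ℕ, ⋃ t, ⋃ (_ : m ≤ t), E t) := by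
  have hGmeas : ∀ m : ℕ, MeasurableSet (⋃ t, ⋃ (_ : m ≤ t), E t) := fun m =>
    MeasurableSet.iUnion (fun t => MeasurableSet.iUnion (fun _ => hmeas t))
  have hanti : Antitone (fun m : ℕ => ⋃ t, ⋃ (_ : m ≤ t), E t) := by
    intro m m' hmm'
    apply Set.iUnion₂_subset
    intro t ht
    exact Set.subset_iUnion₂ (s := fun t _ => E t) t (le_trans hmm' ht)
  have hfin : volume (⋃ t, ⋃ (_ : (0:ℕ) ≤ t), E t) ≠ ∞ := by
    exact ne_of_lt (lt_of_le_of_lt (measure_mono (Set.iUnion₂_subset (fun t _ => hsub t)))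
      measure_Icc_lt_top)
  have := tendsto_measure_iInter_atTop (μ := volume)
    (fun m => (hGmeas m).nullMeasurableSet) hanti ⟨0, hfin⟩
  exact ge_of_tendsto this (Filter.Eventually.of_forall hv)
noncomputable def Bfun (L : ℝ) (w ψ ρn : ℕ → ℝ) (s t : ℕ) : ℝ :=
  2 * L * (w s * w t) + 4 * L * (ψ t / ρn s)

lemma Bfun_nonneg (L : ℝ) (w ψ ρn : ℕ → ℝ) (hL : 0 ≤ L) (hw : ∀ j, 0 ≤ w j)
    (hψ : ∀ j, 0 ≤ ψ j) (hρ : ∀ j, 0 ≤ ρn j) (s t : ℕ) : 0 ≤ Bfun L w ψ ρn s t := by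
  unfold Bfun
  have h1 := hw s; have h2 := hw t; have h3 := hψ t; have h4 := hρ s
  have h5 : 0 ≤ ψ t / ρn s := div_nonneg h3 h4
  positivity

lemma arith1 (L p q r u : ℝ) (hr : r ≠ 0) (hu : u ≠ 0) :
    L / u * ((p + 2 * r) / r * (2 * q)) = 2 * L * (p / u * (q / r)) + 4 * L * (q / u) := by
  field_simp
  ring
set_option maxHeartbeats 2000000 in
lemma main_local
    (J : Type) [Countable J] (c : J → ℝ) (β : J → ℝ)
    (P : J → Prop)
    (hJfin : ∀ t : ℕ, {α : J | β α ≤ 2 ^ t}.Finite)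
    (ρ : ℝ → ℝ) (hρpos : ∀ t : ℝ, 0 < t → 0 < ρ t) (hρ0 : Tendsto ρ atTop (nhds 0))
    (Ψ : ℝ → ℝ) (hΨpos : ∀ t : ℝ, 0 < t → 0 < Ψ t)
    (hΨdec : ∀ s t : ℝ, 0 < s → s ≤ t → Ψ t ≤ Ψ s)
    (T : ℕ) (hhalf : ∀ t : ℕ, T ≤ t → Ψ (2 ^ (t + 1)) ≤ Ψ (2 ^ t) / 2)
    (hdiv : ¬ Summable fun t : ℕ => Ψ (2 ^ t) / ρ (2 ^ t))
    (K : ℝ) (hK : 1 ≤ K)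
    (a b : ℝ) (hab : a < b) (κ : ℝ) (hκ : 0 < κ)
    (hliminf : ENNReal.ofReal κ * volume (Icc a b) ≤
      liminf (fun t : ℕ => volume (⋃ α ∈ {α : J | β α ≤ 2 ^ t ∧ P α},
        Ioo (c α - ρ (2 ^ t)) (c α + ρ (2 ^ t)) ∩ Icc a b)) atTop) :
    ∃ M : Set ℝ, MeasurableSet M ∧ M ⊆ Icc a b ∧
      ENNReal.ofReal (min (κ / 2) (κ ^ 2 / 1792) * (b - a)) ≤ volume M ∧
      ∀ x ∈ M, ∀ m : ℕ, ∃ t : ℕ, m ≤ t ∧ ∃ α : J, β α ≤ 2 ^ t ∧ P α ∧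
        c α ∈ Icc a b ∧ |x - c α| < Ψ (2 ^ t) / K := by
  classical
  set L := b - a with hLdef
  have hL : 0 < L := by rw [hLdef]; linarith
  have hK0 : 0 < K := lt_of_lt_of_le one_pos hK
  set ψ : ℕ → ℝ := fun t => Ψ (2 ^ t) / K with hψdef
  have h2pow : ∀ t : ℕ, (0:ℝ) < 2 ^ t := fun t => by positivity
  have hψpos : ∀ t, 0 < ψ t := fun t => div_pos (hΨpos _ (h2pow t)) hK0
  have hρtpos : ∀ t : ℕ, 0 < ρ (2 ^ t) := fun t => hρpos _ (h2pow t)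
  have hρtnn : ∀ t : ℕ, 0 ≤ ρ (2 ^ t) := fun t => le_of_lt (hρtpos t)
  have hρto0 : Tendsto (fun t : ℕ => ρ (2 ^ t)) atTop (nhds 0) :=
    hρ0.comp (tendsto_pow_atTop_atTop_of_one_lt one_lt_two)
  have hψ0 : ∀ ε : ℝ, 0 < ε → ∃ m : ℕ, ∀ t : ℕ, m ≤ t → ψ t < ε := by
    intro ε hε
    obtain ⟨m, hm⟩ := psi_small Ψ T hΨpos hΨdec hhalf (ε * K) (mul_pos hε hK0)
    refine ⟨m, fun t ht => ?_⟩
    have h1 := hm t ht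
    rw [hψdef]
    simp only
    rw [div_lt_iff₀ hK0]
    linarith
  have hψtail : ∀ s : ℕ, T ≤ s → ∀ n : ℕ, ∑ t ∈ Finset.Ico (s + 1) n, ψ t ≤ ψ s := by
    intro s hs n
    have h1 := psi_tail Ψ T hΨpos hΨdec hhalf s hs n
    calc ∑ t ∈ Finset.Ico (s + 1) n, ψ t = (∑ t ∈ Finset.Ico (s + 1) n, Ψ (2 ^ t)) / K := by
          rw [hψdef]; simp only [← Finset.sum_div]
      _ ≤ Ψ (2 ^ s) / K := by gcongr
  -- the ratio sequence
  set w : ℕ → ℝ := fun t => ψ t / ρ (2 ^ t) with hwdef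
  have hwpos : ∀ t, 0 < w t := fun t => div_pos (hψpos t) (hρtpos t)
  have hwdiv : ¬ Summable w := by
    intro hs
    apply hdiv
    have : (fun t : ℕ => Ψ (2 ^ t) / ρ (2 ^ t)) = fun t => K * w t := by
      funext t
      rw [hwdef]
      simp only
      rw [hψdef]
      field_simp
    rw [this]
    exact hs.mul_left K
  -- index sets
  set Jin : ℕ → Set J := fun t => {α : J | β α ≤ 2 ^ t ∧ P α ∧ c α ∈ Icc a b} with hJindef
  have hJinfin : ∀ t, (Jin t).Finite := fun t => (hJfin t).subset (fun α hα => hα.1)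
  -- boundary strip estimate
  set U : ℕ → Set ℝ := fun t => ⋃ α ∈ {α : J | β α ≤ 2 ^ t ∧ P α},
    Ioo (c α - ρ (2 ^ t)) (c α + ρ (2 ^ t)) ∩ Icc a b with hUdef
  set Uin : ℕ → Set ℝ := fun t => ⋃ α ∈ Jin t,
    Ioo (c α - ρ (2 ^ t)) (c α + ρ (2 ^ t)) ∩ Icc a b with hUindef
  have hUsub : ∀ t : ℕ, volume (U t) ≤ volume (Uin t) + ENNReal.ofReal (2 * ρ (2 ^ t)) := by
    intro t
    have hsub : U t ⊆ Uin t ∪ (Ico a (a + ρ (2 ^ t)) ∪ Ioc (b - ρ (2 ^ t)) b) := by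
      intro x hx
      rw [hUdef] at hx
      simp only [Set.mem_iUnion] at hx
      obtain ⟨α, hα, hx⟩ := hx
      obtain ⟨hx1, hx2⟩ := hx
      rcases le_or_gt a (c α) with h1 | h1
      · rcases le_or_gt (c α) b with h2 | h2
        · left
          rw [hUindef]
          simp only [Set.mem_iUnion]
          exact ⟨α, ⟨hα.1, hα.2, h1, h2⟩, hx1, hx2⟩
        · right; right
          constructor
          · have := hx1.1; linarith
          · exact hx2.2
      · right; left
        constructor
        · exact hx2.1
        · have := hx1.2; linarith
    calc volume (U t) ≤ volume (Uin t ∪ (Ico a (a + ρ (2 ^ t)) ∪ Ioc (b - ρ (2 ^ t)) b)) :=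
          measure_mono hsub
      _ ≤ volume (Uin t) + volume (Ico a (a + ρ (2 ^ t)) ∪ Ioc (b - ρ (2 ^ t)) b) :=
          measure_union_le _ _
      _ ≤ volume (Uin t) + (volume (Ico a (a + ρ (2 ^ t))) + volume (Ioc (b - ρ (2 ^ t)) b)) := by
          gcongr
          exact measure_union_le _ _
      _ = volume (Uin t) + ENNReal.ofReal (2 * ρ (2 ^ t)) := by
          rw [Real.volume_Ico, Real.volume_Ioc, ← ENNReal.ofReal_add (by linarith [hρtpos t])
            (by linarith [hρtpos t])]
          ring_nf
  -- eventually the inner union is large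
  have hEV : ∀ᶠ t : ℕ in atTop, ENNReal.ofReal (κ * L / 2) ≤ volume (Uin t) := by
    have h1 : ENNReal.ofReal (3 * κ * L / 4) < ENNReal.ofReal κ * volume (Icc a b) := by
      rw [Real.volume_Icc, ← ENNReal.ofReal_mul (le_of_lt hκ), ← hLdef]
      rw [ENNReal.ofReal_lt_ofReal_iff (mul_pos hκ hL)]
      nlinarith [mul_pos hκ hL]
    have h2 : ∀ᶠ t : ℕ in atTop, ENNReal.ofReal (3 * κ * L / 4) < volume (U t) :=
      eventually_lt_of_lt_liminf (lt_of_lt_of_le h1 hliminf)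
    have h3 : ∀ᶠ t : ℕ in atTop, ρ (2 ^ t) ≤ κ * L / 8 :=
      hρto0.eventually (eventually_le_nhds (by nlinarith [mul_pos hκ hL]))
    filter_upwards [h2, h3] with t h2t h3t
    have h4 : volume (U t) ≤ volume (Uin t) + ENNReal.ofReal (2 * ρ (2 ^ t)) := hUsub t
    have h5 : ENNReal.ofReal (3 * κ * L / 4) ≤ volume (Uin t) + ENNReal.ofReal (2 * ρ (2 ^ t)) :=
      le_trans (le_of_lt h2t) h4
    have h6 : ENNReal.ofReal (3 * κ * L / 4) - ENNReal.ofReal (2 * ρ (2 ^ t)) ≤ volume (Uin t) :=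
      tsub_le_iff_right.mpr h5
    refine le_trans ?_ h6
    rw [← ENNReal.ofReal_sub _ (by linarith [hρtpos t])]
    apply ENNReal.ofReal_le_ofReal
    linarith
  -- Vitali subfamilies
  have hvit : ∀ t : ℕ, ∃ u ⊆ Jin t,
      (u.PairwiseDisjoint fun α => closedBall (c α) (ρ (2 ^ t))) ∧
      ∀ α ∈ Jin t, ∃ γ ∈ u, closedBall (c α) (ρ (2 ^ t)) ⊆ closedBall (c γ) (4 * ρ (2 ^ t)) :=
    fun t => Vitali.exists_disjoint_subfamily_covering_enlargement_closedBall (Jin t) c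
      (fun _ => ρ (2 ^ t)) (ρ (2 ^ t)) (fun _ _ => le_rfl) 4 (by norm_num)
  choose u huJ hudisj hucov using hvit
  have hufin : ∀ t, (u t).Finite := fun t => (hJinfin t).subset (huJ t)
  set uF : ℕ → Finset J := fun t => (hufin t).toFinset with huFdef
  have huFmem : ∀ t α, α ∈ uF t ↔ α ∈ u t := fun t α => (hufin t).mem_toFinset
  -- the two cases
  by_cases hcase : ∃ᶠ t in atTop, ρ (2 ^ t) ≤ ψ t
  · -- EASY CASE
    set E : ℕ → Set ℝ := fun t => ⋃ α ∈ Jin t, Ioo (c α - ψ t) (c α + ψ t) ∩ Icc a b with hEdef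
    have hEmeas : ∀ t, MeasurableSet (E t) := fun t =>
      MeasurableSet.biUnion (Set.to_countable _)
        (fun α _ => measurableSet_Ioo.inter measurableSet_Icc)
    have hEsub : ∀ t, E t ⊆ Icc a b := fun t =>
      Set.iUnion₂_subset (fun α _ => Set.inter_subset_right)
    have hkey : ∀ m : ℕ, ENNReal.ofReal (κ * L / 2) ≤ volume (⋃ t, ⋃ (_ : m ≤ t), E t) := by
      intro m
      obtain ⟨t, htm, ht1, ht2⟩ := frequently_atTop.mp (hcase.and_eventually hEV) m
      have hUE : Uin t ⊆ E t := by
        apply Set.iUnion₂_subset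
        intro α hα
        refine Set.subset_iUnion₂_of_subset α hα ?_
        apply Set.inter_subset_inter_left
        apply Set.Ioo_subset_Ioo <;> linarith
      calc ENNReal.ofReal (κ * L / 2) ≤ volume (Uin t) := ht2
        _ ≤ volume (E t) := measure_mono hUE
        _ ≤ volume (⋃ t', ⋃ (_ : m ≤ t'), E t') :=
            measure_mono (Set.subset_iUnion₂ (s := fun t' _ => E t') t htm)
    refine ⟨⋂ m : ℕ, ⋃ t, ⋃ (_ : m ≤ t), E t, ?_, ?_, ?_, ?_⟩
    · exact MeasurableSet.iInter (fun m => MeasurableSet.iUnion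
        (fun t => MeasurableSet.iUnion (fun _ => hEmeas t)))
    · intro x hx
      have := Set.mem_iInter.mp hx 0
      simp only [Set.mem_iUnion] at this
      obtain ⟨t, _, ht⟩ := this
      exact hEsub t ht
    · refine le_trans ?_ (limsup_lower E hEmeas a b hEsub _ hkey)
      apply ENNReal.ofReal_le_ofReal
      calc min (κ / 2) (κ ^ 2 / 1792) * L ≤ (κ / 2) * L :=
            mul_le_mul_of_nonneg_right (min_le_left _ _) hL.le
        _ = κ * L / 2 := by ring
    · intro x hx m
      have := Set.mem_iInter.mp hx m
      simp only [Set.mem_iUnion] at this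
      obtain ⟨t, htm, ht⟩ := this
      rw [hEdef] at ht
      simp only [Set.mem_iUnion] at ht
      obtain ⟨α, hα, hmem, _⟩ := ht
      refine ⟨t, htm, α, hα.1, hα.2.1, hα.2.2, ?_⟩
      rw [abs_sub_lt_iff]
      constructor
      · have := hmem.2; simp only [hψdef] at this; linarith
      · have := hmem.1; simp only [hψdef] at this; linarith
  · -- HARD CASE
    have hcase' : ∀ᶠ t : ℕ in atTop, ψ t < ρ (2 ^ t) := by
      have := Filter.not_frequently.mp hcase
      filter_upwards [this] with t ht
      exact lt_of_not_ge ht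
    set E : ℕ → Set ℝ := fun t => ⋃ α ∈ u t, Ioo (c α - ψ t) (c α + ψ t) ∩ Icc a b with hEdef
    have hEmeas : ∀ t, MeasurableSet (E t) := fun t =>
      MeasurableSet.biUnion (Set.to_countable _)
        (fun α _ => measurableSet_Ioo.inter measurableSet_Icc)
    have hEsub : ∀ t, E t ⊆ Icc a b := fun t =>
      Set.iUnion₂_subset (fun α _ => Set.inter_subset_right)
    -- thresholds
    obtain ⟨m₁, hm₁⟩ := eventually_atTop.mp hEV
    obtain ⟨m₂, hm₂⟩ := eventually_atTop.mp hcase'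
    obtain ⟨m₃, hm₃⟩ := hψ0 L hL
    obtain ⟨m₄, hm₄⟩ := eventually_atTop.mp
      (hρto0.eventually (eventually_le_nhds (show (0:ℝ) < L / 2 by linarith)))
    set m₀ : ℕ := max (max m₁ m₂) (max (max m₃ m₄) T) with hm₀def
    have hm₀1 : ∀ t, m₀ ≤ t → ENNReal.ofReal (κ * L / 2) ≤ volume (Uin t) :=
      fun t ht => hm₁ t (le_trans (le_trans (le_max_left _ _) (le_max_left _ _)) ht)
    have hm₀2 : ∀ t, m₀ ≤ t → ψ t < ρ (2 ^ t) :=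
      fun t ht => hm₂ t (le_trans (le_trans (le_max_right _ _) (le_max_left _ _)) ht)
    have hm₀3 : ∀ t, m₀ ≤ t → ψ t < L :=
      fun t ht => hm₃ t (le_trans (le_trans (le_max_left _ _) (le_trans (le_max_left _ _)
        (le_max_right _ _))) ht)
    have hm₀4 : ∀ t, m₀ ≤ t → ρ (2 ^ t) ≤ L / 2 :=
      fun t ht => hm₄ t (le_trans (le_trans (le_max_right _ _) (le_trans (le_max_left _ _)
        (le_max_right _ _))) ht)
    have hm₀T : T ≤ m₀ := le_trans (le_max_right _ _) (le_max_right _ _)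
    -- cardinality bounds
    have hcard_low : ∀ t, m₀ ≤ t → κ * L / 2 ≤ ((uF t).card : ℝ) * (8 * ρ (2 ^ t)) := by
      intro t ht
      have hcov : Uin t ⊆ ⋃ γ ∈ uF t, closedBall (c γ) (4 * ρ (2 ^ t)) := by
        apply Set.iUnion₂_subset
        intro α hα
        obtain ⟨γ, hγ, hγsub⟩ := hucov t α hα
        refine Set.Subset.trans ?_ (Set.subset_iUnion₂ (s := fun γ _ => closedBall (c γ)
          (4 * ρ (2 ^ t))) γ ((huFmem t γ).mpr hγ))
        refine Set.Subset.trans ?_ hγsub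
        intro x hx
        rw [mem_closedBall, Real.dist_eq, abs_sub_le_iff]
        have h1 := hx.1.1
        have h2 := hx.1.2
        constructor <;> linarith
      have h1 : volume (Uin t) ≤ ∑ γ ∈ uF t, volume (closedBall (c γ) (4 * ρ (2 ^ t))) :=
        le_trans (measure_mono hcov) (measure_biUnion_finset_le _ _)
      have h2 : ∑ γ ∈ uF t, volume (closedBall (c γ) (4 * ρ (2 ^ t)))
          = ((uF t).card : ℝ≥0∞) * ENNReal.ofReal (8 * ρ (2 ^ t)) := by
        have : ∀ γ, volume (closedBall (c γ) (4 * ρ (2 ^ t))) = ENNReal.ofReal (8 * ρ (2 ^ t)) := by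
          intro γ
          rw [Real.volume_closedBall]
          congr 1
          ring
        rw [Finset.sum_congr rfl (fun γ _ => this γ), Finset.sum_const, nsmul_eq_mul]
      have h3 : ENNReal.ofReal (κ * L / 2) ≤ ENNReal.ofReal (((uF t).card : ℝ) * (8 * ρ (2 ^ t))) := by
        rw [ENNReal.ofReal_mul (Nat.cast_nonneg _), ENNReal.ofReal_natCast]
        exact le_trans (hm₀1 t ht) (le_trans h1 (le_of_eq h2))
      exact (ENNReal.ofReal_le_ofReal_iff (mul_nonneg (Nat.cast_nonneg _) (by linarith [hρtpos t]))).mp h3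
    have hdisjF : ∀ t, (↑(uF t) : Set J).Pairwise
        (fun i j => Disjoint (closedBall (c i) (ρ (2 ^ t))) (closedBall (c j) (ρ (2 ^ t)))) := by
      intro t
      have : (↑(uF t) : Set J) = u t := (hufin t).coe_toFinset
      rw [this]
      exact hudisj t
    have hcard_up : ∀ t, m₀ ≤ t → ((uF t).card : ℝ) * (2 * ρ (2 ^ t)) ≤ 2 * L := by
      intro t ht
      apply card_balls (uF t) c (ρ (2 ^ t)) (2 * L) (hρtpos t) (by linarith) (hdisjF t)
        (Icc (a - ρ (2 ^ t)) (b + ρ (2 ^ t)))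
      · intro γ hγ
        have hγin : γ ∈ Jin t := huJ t ((huFmem t γ).mp hγ)
        have hc : c γ ∈ Icc a b := hγin.2.2
        intro x hx
        rw [mem_closedBall, Real.dist_eq, abs_sub_le_iff] at hx
        constructor
        · have := hc.1; linarith [hx.2]
        · have := hc.2; linarith [hx.1]
      · rw [Real.volume_Icc]
        apply ENNReal.ofReal_le_ofReal
        have := hm₀4 t ht
        rw [hLdef] at *
        linarith
    -- lower bound for E
    have hElow : ∀ t, m₀ ≤ t → ENNReal.ofReal (κ / 16 * L * w t) ≤ volume (E t) := by
      intro t ht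
      have hdisj2 : (↑(uF t) : Set J).Pairwise
          (Function.onFun Disjoint fun α => Ioo (c α - ψ t) (c α + ψ t) ∩ Icc a b) := by
        intro i hi j hj hij
        have h1 := hdisjF t hi hj hij
        apply Disjoint.mono _ _ h1
        all_goals
          intro x hx
          rw [mem_closedBall, Real.dist_eq]
          have h2 := hx.1
          rw [Set.mem_Ioo] at h2
          rw [abs_sub_le_iff]
          have := le_of_lt (hm₀2 t ht)
          constructor <;> linarith [h2.1, h2.2]
      have hEeq : E t = ⋃ γ ∈ uF t, Ioo (c γ - ψ t) (c γ + ψ t) ∩ Icc a b := by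
        rw [hEdef]
        exact Set.iUnion_congr fun γ => Set.iUnion_congr_Prop ((huFmem t γ).symm) (fun _ => rfl)
      rw [hEeq, measure_biUnion_finset hdisj2
        (fun γ _ => measurableSet_Ioo.inter measurableSet_Icc)]
      have h5 : ∀ γ ∈ uF t, ENNReal.ofReal (ψ t) ≤
          volume (Ioo (c γ - ψ t) (c γ + ψ t) ∩ Icc a b) := by
        intro γ hγ
        have hcγ : c γ ∈ Icc a b := (huJ t ((huFmem t γ).mp hγ)).2.2
        refine le_trans ?_ (ball_inter_Icc_vol (c γ) (ψ t) a b hcγ (hψpos t))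
        apply ENNReal.ofReal_le_ofReal
        rw [← hLdef]
        exact le_min le_rfl (le_of_lt (hm₀3 t ht))
      have h6 : ((uF t).card : ℝ≥0∞) * ENNReal.ofReal (ψ t) ≤
          ∑ γ ∈ uF t, volume (Ioo (c γ - ψ t) (c γ + ψ t) ∩ Icc a b) := by
        calc ((uF t).card : ℝ≥0∞) * ENNReal.ofReal (ψ t)
            = ∑ _γ ∈ uF t, ENNReal.ofReal (ψ t) := by
              rw [Finset.sum_const, nsmul_eq_mul]
          _ ≤ _ := Finset.sum_le_sum h5
      refine le_trans ?_ h6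
      rw [← ENNReal.ofReal_natCast ((uF t).card), ← ENNReal.ofReal_mul (Nat.cast_nonneg _)]
      apply ENNReal.ofReal_le_ofReal
      have key : κ * L / 2 * ψ t ≤ ((uF t).card : ℝ) * (8 * ρ (2 ^ t)) * ψ t :=
        mul_le_mul_of_nonneg_right (hcard_low t ht) (hψpos t).le
      have hρt := hρtpos t
      have hcancel : ψ t / ρ (2 ^ t) * ρ (2 ^ t) = ψ t := div_mul_cancel₀ _ (hρtpos t).ne'
      have heq : κ / 16 * L * w t = (κ * L / 2 * ψ t) / (8 * ρ (2 ^ t)) := by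
        simp only [hwdef]
        rw [eq_div_iff (ne_of_gt (by linarith [hρtpos t] : (0:ℝ) < 8 * ρ (2 ^ t)))]
        calc κ / 16 * L * (ψ t / ρ (2 ^ t)) * (8 * ρ (2 ^ t))
            = (κ / 2) * L * (ψ t / ρ (2 ^ t) * ρ (2 ^ t)) := by ring
          _ = κ * L / 2 * ψ t := by rw [hcancel]; ring
      rw [heq, div_le_iff₀ (by linarith [hρtpos t])]
      nlinarith [key]
    -- cardinality upper bound in convenient form
    have hcard_up' : ∀ t, m₀ ≤ t → ((uF t).card : ℝ) ≤ L / ρ (2 ^ t) := by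
      intro t ht
      have h1 := hcard_up t ht
      have hρt := hρtpos t
      rw [le_div_iff₀ hρt]
      nlinarith
    -- pairwise intersection upper bound
    have hpair : ∀ s t : ℕ, m₀ ≤ s → s ≤ t →
        volume (E s ∩ E t) ≤
          ENNReal.ofReal (2 * L * (w s * w t) + 4 * L * (ψ t / ρ (2 ^ s))) := by
      intro s t hs hst
      have hρs := hρtpos s
      have hρt := hρtpos t
      have hψs := hψpos s
      have hψt := hψpos t
      have hψtρt : ψ t ≤ ρ (2 ^ t) := le_of_lt (hm₀2 t (le_trans hs hst))
      set W : J → Finset J := fun γ => (uF t).filter (fun δ => |c δ - c γ| ≤ ψ s + ψ t) with hWdef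
      have hWcard : ∀ γ, ((W γ).card : ℝ) * (2 * ρ (2 ^ t)) ≤ 2 * (ψ s + ψ t + ρ (2 ^ t)) := by
        intro γ
        have hdW : (↑(W γ) : Set J).Pairwise
            (fun i j => Disjoint (closedBall (c i) (ρ (2 ^ t))) (closedBall (c j) (ρ (2 ^ t)))) :=
          Set.Pairwise.mono (fun δ hδ => Finset.mem_coe.mpr
            (Finset.mem_of_mem_filter δ (Finset.mem_coe.mp hδ))) (hdisjF t)
        have hSW : ∀ δ ∈ W γ, closedBall (c δ) (ρ (2 ^ t)) ⊆
            closedBall (c γ) (ψ s + ψ t + ρ (2 ^ t)) := by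
          intro δ hδ y hy
          have h1 := (Finset.mem_filter.mp hδ).2
          rw [mem_closedBall, Real.dist_eq] at hy ⊢
          have h2 : |y - c γ| ≤ |y - c δ| + |c δ - c γ| := by
            calc |y - c γ| = |(y - c δ) + (c δ - c γ)| := by ring_nf
              _ ≤ |y - c δ| + |c δ - c γ| := abs_add_le _ _
          linarith
        have hLW : volume (closedBall (c γ) (ψ s + ψ t + ρ (2 ^ t))) ≤
            ENNReal.ofReal (2 * (ψ s + ψ t + ρ (2 ^ t))) :=
          le_of_eq (Real.volume_closedBall _ _)
        exact card_balls (W γ) c (ρ (2 ^ t)) _ hρt (by linarith) hdW _ hSW hLW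
      have hWcard' : ∀ γ, ((W γ).card : ℝ) ≤ (ψ s + 2 * ρ (2 ^ t)) / ρ (2 ^ t) := by
        intro γ
        have h1 := hWcard γ
        rw [le_div_iff₀ hρt]
        nlinarith
      have hsub2 : E s ∩ E t ⊆ ⋃ γ ∈ uF s,
          (Ioo (c γ - ψ s) (c γ + ψ s) ∩ ⋃ δ ∈ uF t, Ioo (c δ - ψ t) (c δ + ψ t)) := by
        intro x hx
        obtain ⟨hxs, hxt⟩ := hx
        rw [hEdef] at hxs hxt
        simp only [Set.mem_iUnion] at hxs hxt
        obtain ⟨γ, hγ, hγ1, _⟩ := hxs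
        obtain ⟨δ, hδ, hδ1, _⟩ := hxt
        simp only [Set.mem_iUnion]
        exact ⟨γ, (huFmem s γ).mpr hγ, hγ1, Set.mem_iUnion.mpr
          ⟨δ, Set.mem_iUnion.mpr ⟨(huFmem t δ).mpr hδ, hδ1⟩⟩⟩
      have hcomp : ∀ γ, volume (Ioo (c γ - ψ s) (c γ + ψ s) ∩
          ⋃ δ ∈ uF t, Ioo (c δ - ψ t) (c δ + ψ t)) ≤
          ENNReal.ofReal ((ψ s + 2 * ρ (2 ^ t)) / ρ (2 ^ t) * (2 * ψ t)) := by
        intro γ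
        have hsub3 : Ioo (c γ - ψ s) (c γ + ψ s) ∩ (⋃ δ ∈ uF t, Ioo (c δ - ψ t) (c δ + ψ t)) ⊆
            ⋃ δ ∈ W γ, Ioo (c δ - ψ t) (c δ + ψ t) := by
          intro x hx
          obtain ⟨hx1, hx2⟩ := hx
          simp only [Set.mem_iUnion] at hx2 ⊢
          obtain ⟨δ, hδ, hδ1⟩ := hx2
          refine ⟨δ, ?_, hδ1⟩
          rw [hWdef]
          apply Finset.mem_filter.mpr
          refine ⟨hδ, ?_⟩
          rw [Set.mem_Ioo] at hx1 hδ1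
          have e1 : |x - c γ| < ψ s := by rw [abs_sub_lt_iff]; constructor <;> linarith [hx1.1, hx1.2]
          have e2 : |x - c δ| < ψ t := by rw [abs_sub_lt_iff]; constructor <;> linarith [hδ1.1, hδ1.2]
          calc |c δ - c γ| = |(c δ - x) + (x - c γ)| := by ring_nf
            _ ≤ |c δ - x| + |x - c γ| := abs_add_le _ _
            _ = |x - c δ| + |x - c γ| := by rw [abs_sub_comm]
            _ ≤ ψ s + ψ t := by linarith [le_of_lt e1, le_of_lt e2]
        calc volume (Ioo (c γ - ψ s) (c γ + ψ s) ∩ ⋃ δ ∈ uF t, Ioo (c δ - ψ t) (c δ + ψ t))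
            ≤ volume (⋃ δ ∈ W γ, Ioo (c δ - ψ t) (c δ + ψ t)) := measure_mono hsub3
          _ ≤ ∑ δ ∈ W γ, volume (Ioo (c δ - ψ t) (c δ + ψ t)) := measure_biUnion_finset_le _ _
          _ = ((W γ).card : ℝ≥0∞) * ENNReal.ofReal (2 * ψ t) := by
              have : ∀ δ, volume (Ioo (c δ - ψ t) (c δ + ψ t)) = ENNReal.ofReal (2 * ψ t) := by
                intro δ
                rw [Real.volume_Ioo]
                congr 1
                ring
              rw [Finset.sum_congr rfl (fun δ _ => this δ), Finset.sum_const, nsmul_eq_mul]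
          _ ≤ ENNReal.ofReal ((ψ s + 2 * ρ (2 ^ t)) / ρ (2 ^ t) * (2 * ψ t)) := by
              rw [← ENNReal.ofReal_natCast ((W γ).card), ← ENNReal.ofReal_mul (Nat.cast_nonneg _)]
              apply ENNReal.ofReal_le_ofReal
              exact mul_le_mul_of_nonneg_right (hWcard' γ) (by linarith)
      calc volume (E s ∩ E t)
          ≤ volume (⋃ γ ∈ uF s, (Ioo (c γ - ψ s) (c γ + ψ s) ∩
              ⋃ δ ∈ uF t, Ioo (c δ - ψ t) (c δ + ψ t))) := measure_mono hsub2
        _ ≤ ∑ γ ∈ uF s, volume (Ioo (c γ - ψ s) (c γ + ψ s) ∩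
              ⋃ δ ∈ uF t, Ioo (c δ - ψ t) (c δ + ψ t)) := measure_biUnion_finset_le _ _
        _ ≤ ∑ _γ ∈ uF s, ENNReal.ofReal ((ψ s + 2 * ρ (2 ^ t)) / ρ (2 ^ t) * (2 * ψ t)) :=
            Finset.sum_le_sum (fun γ _ => hcomp γ)
        _ = ((uF s).card : ℝ≥0∞) * ENNReal.ofReal ((ψ s + 2 * ρ (2 ^ t)) / ρ (2 ^ t) * (2 * ψ t)) := by
            rw [Finset.sum_const, nsmul_eq_mul]
        _ ≤ ENNReal.ofReal (2 * L * (w s * w t) + 4 * L * (ψ t / ρ (2 ^ s))) := by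
            rw [← ENNReal.ofReal_natCast ((uF s).card), ← ENNReal.ofReal_mul (Nat.cast_nonneg _)]
            apply ENNReal.ofReal_le_ofReal
            have h1 : ((uF s).card : ℝ) ≤ L / ρ (2 ^ s) := hcard_up' s hs
            have h2 : ((uF s).card : ℝ) * ((ψ s + 2 * ρ (2 ^ t)) / ρ (2 ^ t) * (2 * ψ t)) ≤
                (L / ρ (2 ^ s)) * ((ψ s + 2 * ρ (2 ^ t)) / ρ (2 ^ t) * (2 * ψ t)) :=
              mul_le_mul_of_nonneg_right h1 (mul_nonneg (div_nonneg (by linarith) hρt.le) (by linarith))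
            refine le_trans h2 (le_of_eq ?_)
            simp only [hwdef]
            exact arith1 L (ψ s) (ψ t) (ρ (2 ^ t)) (ρ (2 ^ s)) (hρtpos t).ne' (hρtpos s).ne'
    -- main measure bound via Chung-Erdos
    have hmain : ∀ m : ℕ, m₀ ≤ m →
        ENNReal.ofReal (κ ^ 2 / 1792 * L) ≤ volume (⋃ t, ⋃ (_ : m ≤ t), E t) := by
      intro m hm
      obtain ⟨n, hmn, hSS6⟩ := div_sum w hwpos hwdiv m 6
      set F : Finset ℕ := Finset.Ico m n with hFdef
      set SS : ℝ := ∑ t ∈ F, w t with hSSdef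
      have hSSpos : 0 < SS := lt_of_lt_of_le (by norm_num) hSS6
      have hFm₀ : ∀ t ∈ F, m₀ ≤ t := fun t ht => le_trans hm (Finset.mem_Ico.mp ht).1
      -- numerator bound
      have hNum : ENNReal.ofReal (κ / 16 * L * SS) ≤ ∑ t ∈ F, volume (E t) := by
        rw [hSSdef, Finset.mul_sum, ENNReal.ofReal_sum_of_nonneg (fun t _ =>
          (mul_pos (mul_pos (by linarith) hL) (hwpos t)).le)]
        exact Finset.sum_le_sum (fun t ht => hElow t (hFm₀ t ht))
      -- denominator bound
      have hterm : ∀ s ∈ F, ∀ t ∈ F, volume (E s ∩ E t) ≤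
          ENNReal.ofReal ((if s ≤ t then Bfun L w ψ (fun j => ρ (2 ^ j)) s t else 0)
            + (if t ≤ s then Bfun L w ψ (fun j => ρ (2 ^ j)) t s else 0)) := by
        intro s hs t ht
        have hBnn : ∀ s' t' : ℕ, 0 ≤ Bfun L w ψ (fun j => ρ (2 ^ j)) s' t' := fun s' t' =>
          Bfun_nonneg L w ψ _ (le_of_lt hL) (fun j => (hwpos j).le) (fun j => (hψpos j).le)
            (fun j => (hρtpos j).le) s' t'
        rcases le_total s t with h | h
        · refine le_trans (hpair s t (hFm₀ s hs) h) (ENNReal.ofReal_le_ofReal ?_)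
          rw [if_pos h]
          have h2 : (0:ℝ) ≤ if t ≤ s then Bfun L w ψ (fun j => ρ (2 ^ j)) t s else 0 := by
            split_ifs
            · exact hBnn t s
            · exact le_rfl
          have h3 : 2 * L * (w s * w t) + 4 * L * (ψ t / ρ (2 ^ s))
              = Bfun L w ψ (fun j => ρ (2 ^ j)) s t := rfl
          linarith [h3.le]
        · rw [Set.inter_comm]
          refine le_trans (hpair t s (hFm₀ t ht) h) (ENNReal.ofReal_le_ofReal ?_)
          rw [if_pos h]
          have h2 : (0:ℝ) ≤ if s ≤ t then Bfun L w ψ (fun j => ρ (2 ^ j)) s t else 0 := by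
            split_ifs
            · exact hBnn s t
            · exact le_rfl
          have h3 : 2 * L * (w t * w s) + 4 * L * (ψ s / ρ (2 ^ t))
              = Bfun L w ψ (fun j => ρ (2 ^ j)) t s := rfl
          linarith [h3.le]
      have hDen : ∑ s ∈ F, ∑ t ∈ F, volume (E s ∩ E t) ≤ ENNReal.ofReal (7 * L * SS ^ 2) := by
        have hBnn : ∀ s' t' : ℕ, 0 ≤ Bfun L w ψ (fun j => ρ (2 ^ j)) s' t' := fun s' t' =>
          Bfun_nonneg L w ψ _ (le_of_lt hL) (fun j => (hwpos j).le) (fun j => (hψpos j).le)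
            (fun j => (hρtpos j).le) s' t'
        have hitenn : ∀ s t : ℕ, (0:ℝ) ≤ (if s ≤ t then Bfun L w ψ (fun j => ρ (2 ^ j)) s t else 0)
            + (if t ≤ s then Bfun L w ψ (fun j => ρ (2 ^ j)) t s else 0) := by
          intro s t
          have := hBnn s t
          have := hBnn t s
          split_ifs <;> linarith
        have h1 : ∑ s ∈ F, ∑ t ∈ F, volume (E s ∩ E t) ≤
            ENNReal.ofReal (∑ s ∈ F, ∑ t ∈ F,
              ((if s ≤ t then Bfun L w ψ (fun j => ρ (2 ^ j)) s t else 0)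
                + (if t ≤ s then Bfun L w ψ (fun j => ρ (2 ^ j)) t s else 0))) := by
          rw [ENNReal.ofReal_sum_of_nonneg (fun s _ => Finset.sum_nonneg (fun t _ => hitenn s t))]
          refine Finset.sum_le_sum (fun s hs => ?_)
          rw [ENNReal.ofReal_sum_of_nonneg (fun t _ => hitenn s t)]
          exact Finset.sum_le_sum (fun t ht => hterm s hs t ht)
        refine le_trans h1 (ENNReal.ofReal_le_ofReal ?_)
        have hsplit : ∑ s ∈ F, ∑ t ∈ F,
            ((if s ≤ t then Bfun L w ψ (fun j => ρ (2 ^ j)) s t else 0)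
              + (if t ≤ s then Bfun L w ψ (fun j => ρ (2 ^ j)) t s else 0))
            = 2 * ∑ s ∈ F, ∑ t ∈ F, (if s ≤ t then Bfun L w ψ (fun j => ρ (2 ^ j)) s t else 0) := by
          rw [Finset.sum_congr rfl (fun s _ => Finset.sum_add_distrib), Finset.sum_add_distrib]
          have hc : ∑ s ∈ F, ∑ t ∈ F, (if t ≤ s then Bfun L w ψ (fun j => ρ (2 ^ j)) t s else 0)
              = ∑ t ∈ F, ∑ s ∈ F, (if t ≤ s then Bfun L w ψ (fun j => ρ (2 ^ j)) t s else 0) :=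
            Finset.sum_comm
          rw [hc]
          ring
        rw [hsplit]
        have hQ : ∑ s ∈ F, ∑ t ∈ F, (if s ≤ t then Bfun L w ψ (fun j => ρ (2 ^ j)) s t else 0)
            ≤ 2 * L * SS ^ 2 + 8 * L * SS := by
          have hper : ∀ s ∈ F, ∑ t ∈ F, (if s ≤ t then Bfun L w ψ (fun j => ρ (2 ^ j)) s t else 0)
              ≤ 2 * L * w s * SS + 8 * L * w s := by
            intro s hs
            have hsm : m ≤ s := (Finset.mem_Ico.mp hs).1
            have hsn : s < n := (Finset.mem_Ico.mp hs).2
            have e1 : ∑ t ∈ F, (if s ≤ t then Bfun L w ψ (fun j => ρ (2 ^ j)) s t else 0)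
                = ∑ t ∈ F.filter (s ≤ ·), Bfun L w ψ (fun j => ρ (2 ^ j)) s t :=
              (Finset.sum_filter _ _).symm
            have e2 : F.filter (s ≤ ·) = Finset.Ico s n := by
              rw [hFdef, Finset.Ico_filter_le, max_eq_right hsm]
            rw [e1, e2]
            have hρs := hρtpos s
            have e3 : ∑ t ∈ Finset.Ico s n, Bfun L w ψ (fun j => ρ (2 ^ j)) s t =
                2 * L * w s * (∑ t ∈ Finset.Ico s n, w t) +
                4 * L / ρ (2 ^ s) * (∑ t ∈ Finset.Ico s n, ψ t) := by
              rw [Finset.mul_sum, Finset.mul_sum, ← Finset.sum_add_distrib]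
              refine Finset.sum_congr rfl (fun t _ => ?_)
              show 2 * L * (w s * w t) + 4 * L * (ψ t / ρ (2 ^ s)) = _
              ring
            rw [e3]
            have e4 : ∑ t ∈ Finset.Ico s n, w t ≤ SS := by
              rw [hSSdef]
              refine Finset.sum_le_sum_of_subset_of_nonneg ?_ (fun t _ _ => (hwpos t).le)
              rw [hFdef]
              exact Finset.Ico_subset_Ico hsm le_rfl
            have e5 : ∑ t ∈ Finset.Ico s n, ψ t ≤ 2 * ψ s := by
              rw [Finset.sum_eq_sum_Ico_succ_bot hsn]
              have := hψtail s (le_trans hm₀T (le_trans hm hsm)) n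
              linarith
            have hws := hwpos s
            have e6 : 4 * L / ρ (2 ^ s) * (2 * ψ s) = 8 * L * w s := by
              simp only [hwdef]
              ring
            have e7 : 2 * L * w s * (∑ t ∈ Finset.Ico s n, w t) ≤ 2 * L * w s * SS :=
              mul_le_mul_of_nonneg_left e4 (by positivity)
            have e8 : 4 * L / ρ (2 ^ s) * (∑ t ∈ Finset.Ico s n, ψ t)
                ≤ 4 * L / ρ (2 ^ s) * (2 * ψ s) :=
              mul_le_mul_of_nonneg_left e5 (by positivity)
            calc 2 * L * w s * (∑ t ∈ Finset.Ico s n, w t)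
                + 4 * L / ρ (2 ^ s) * (∑ t ∈ Finset.Ico s n, ψ t)
                ≤ 2 * L * w s * SS + 4 * L / ρ (2 ^ s) * (2 * ψ s) := add_le_add e7 e8
              _ = 2 * L * w s * SS + 8 * L * w s := by rw [e6]
          calc ∑ s ∈ F, ∑ t ∈ F, (if s ≤ t then Bfun L w ψ (fun j => ρ (2 ^ j)) s t else 0)
              ≤ ∑ s ∈ F, (2 * L * w s * SS + 8 * L * w s) := Finset.sum_le_sum hper
            _ = ∑ s ∈ F, (2 * L * SS) * w s + ∑ s ∈ F, (8 * L) * w s := by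
                rw [← Finset.sum_add_distrib]
                refine Finset.sum_congr rfl (fun s _ => ?_)
                ring
            _ = 2 * L * SS * SS + 8 * L * SS := by
                rw [← Finset.mul_sum, ← Finset.mul_sum, ← hSSdef]
            _ = 2 * L * SS ^ 2 + 8 * L * SS := by ring
        have hLS : 0 ≤ L * SS := (mul_pos hL hSSpos).le
        have h16 : 0 ≤ (L * SS) * (3 * SS - 16) := mul_nonneg hLS (by linarith)
        nlinarith [hQ, h16]
      -- apply Chung-Erdos
      have hCE := chung_erdos volume E hEmeas F
      have hUden : ENNReal.ofReal (κ ^ 2 / 1792 * L) * ENNReal.ofReal (7 * L * SS ^ 2) ≤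
          volume (⋃ t ∈ F, E t) * ENNReal.ofReal (7 * L * SS ^ 2) := by
        calc ENNReal.ofReal (κ ^ 2 / 1792 * L) * ENNReal.ofReal (7 * L * SS ^ 2)
            = ENNReal.ofReal (κ / 16 * L * SS) ^ 2 := by
              rw [← ENNReal.ofReal_mul (mul_nonneg (by positivity) hL.le),
                ← ENNReal.ofReal_pow (mul_nonneg (mul_nonneg (by linarith) hL.le) hSSpos.le)]
              congr 1
              ring
          _ ≤ (∑ t ∈ F, volume (E t)) ^ 2 := pow_le_pow_left' hNum 2
          _ ≤ volume (⋃ t ∈ F, E t) * ∑ s ∈ F, ∑ t ∈ F, volume (E s ∩ E t) := hCE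
          _ ≤ volume (⋃ t ∈ F, E t) * ENNReal.ofReal (7 * L * SS ^ 2) := mul_le_mul_right hDen _
      have hd0 : ENNReal.ofReal (7 * L * SS ^ 2) ≠ 0 := by
        rw [ne_eq, ENNReal.ofReal_eq_zero, not_le]
        exact mul_pos (mul_pos (by norm_num) hL) (pow_pos hSSpos 2)
      have hcancel : ENNReal.ofReal (κ ^ 2 / 1792 * L) ≤ volume (⋃ t ∈ F, E t) :=
        (ENNReal.mul_le_mul_iff_left hd0 ENNReal.ofReal_ne_top).mp hUden
      refine le_trans hcancel (measure_mono ?_)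
      refine Set.iUnion₂_subset (fun t ht => ?_)
      exact Set.subset_iUnion₂ (s := fun t' _ => E t') t (Finset.mem_Ico.mp ht).1
    -- assemble
    refine ⟨⋂ m : ℕ, ⋃ t, ⋃ (_ : m ≤ t), E t, ?_, ?_, ?_, ?_⟩
    · exact MeasurableSet.iInter (fun m => MeasurableSet.iUnion
        (fun t => MeasurableSet.iUnion (fun _ => hEmeas t)))
    · intro x hx
      have := Set.mem_iInter.mp hx 0
      simp only [Set.mem_iUnion] at this
      obtain ⟨t, _, ht⟩ := this
      exact hEsub t ht
    · refine le_trans ?_ (limsup_lower E hEmeas a b hEsub (ENNReal.ofReal (κ ^ 2 / 1792 * L))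
        (fun m => ?_))
      · apply ENNReal.ofReal_le_ofReal
        exact mul_le_mul_of_nonneg_right (min_le_right _ _) hL.le
      · refine le_trans (hmain (max m m₀) (le_max_right _ _)) (measure_mono ?_)
        refine Set.iUnion₂_subset (fun t ht => ?_)
        exact Set.subset_iUnion₂ (s := fun t' _ => E t') t (le_trans (le_max_left _ _) ht)
    · intro x hx m
      have := Set.mem_iInter.mp hx m
      simp only [Set.mem_iUnion] at this
      obtain ⟨t, htm, ht⟩ := this
      rw [hEdef] at ht
      simp only [Set.mem_iUnion] at ht
      obtain ⟨α, hα, hmem, _⟩ := ht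
      have hαJin : α ∈ Jin t := huJ t hα
      refine ⟨t, htm, α, hαJin.1, hαJin.2.1, hαJin.2.2, ?_⟩
      rw [abs_sub_lt_iff]
      constructor
      · have := hmem.2; simp only [hψdef] at this; linarith
      · have := hmem.1; simp only [hψdef] at this; linarith
set_option maxHeartbeats 1000000 in
theorem statement10
    (n : ℕ) (hn : 0 < n)
    (I₀ : Set ℝ) (hI₀ : I₀.OrdConnected) (hI₀bdd : Bornology.IsBounded I₀)
    (f : Fin n → ℝ → ℝ) (hf₀ : ∀ x : ℝ, f ⟨0, hn⟩ x = x)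
    (hlip : ∀ k : Fin n, ∀ x ∈ I₀, ∃ t ∈ nhdsWithin x I₀,
      ∃ K : NNReal, LipschitzOnWith K (f k) t)
    (J : Type) [Countable J]
    (R : J → Fin n → ℝ) (β : J → ℝ) (hβ : ∀ α, 0 < β α)
    (hJfin : ∀ t : ℕ, {α : J | β α ≤ 2 ^ t}.Finite)
    (Φ : ℝ → ℝ) (hΦpos : ∀ t : ℝ, 0 < t → 0 < Φ t)
    (hΦdec : ∀ s t : ℝ, 0 < s → s ≤ t → Φ t ≤ Φ s)
    (ρ : ℝ → ℝ) (hρpos : ∀ t : ℝ, 0 < t → 0 < ρ t)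
    (hρ0 : Tendsto ρ atTop (nhds 0))
    -- local ubiquity of the system (R_C(Φ), β) with respect to ρ
    (hub : ∃ κ : ℝ, 0 < κ ∧ ∀ I : Set ℝ, I ⊆ I₀ → I.OrdConnected →
      ENNReal.ofReal κ * volume I ≤
        liminf (fun t : ℕ =>
          volume (⋃ α ∈ {α : J | β α ≤ 2 ^ t ∧
              ∀ k : Fin n, |f k (R α ⟨0, hn⟩) - R α k| < Φ (β α)},
            Ioo (R α ⟨0, hn⟩ - ρ (2 ^ t)) (R α ⟨0, hn⟩ + ρ (2 ^ t)) ∩ I)) atTop)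
    (Ψ : ℝ → ℝ) (hΨpos : ∀ t : ℝ, 0 < t → 0 < Ψ t)
    (hΨdec : ∀ s t : ℝ, 0 < s → s ≤ t → Ψ t ≤ Ψ s)
    (hΨhalf : ∃ T : ℕ, ∀ t : ℕ, T ≤ t → Ψ (2 ^ (t + 1)) ≤ Ψ (2 ^ t) / 2)
    (hdiv : ¬ Summable fun t : ℕ => Ψ (2 ^ t) / ρ (2 ^ t)) :
    volume {x ∈ I₀ | {α : J |
        (∀ k : Fin n, |f k (R α ⟨0, hn⟩) - R α k| < Φ (β α)) ∧
        |x - R α ⟨0, hn⟩| < Ψ (β α) ∧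
        ∀ k : Fin n, k ≠ ⟨0, hn⟩ → |f k x - R α k| < Ψ (β α) + Φ (β α)}.Infinite} =
      volume I₀ := by
  classical
  obtain ⟨κ, hκ, hub⟩ := hub
  obtain ⟨T, hhalf⟩ := hΨhalf
  set Λ : Set ℝ := {x : ℝ | {α : J |
      (∀ k : Fin n, |f k (R α ⟨0, hn⟩) - R α k| < Φ (β α)) ∧
      |x - R α ⟨0, hn⟩| < Ψ (β α) ∧
      ∀ k : Fin n, k ≠ ⟨0, hn⟩ → |f k x - R α k| < Ψ (β α) + Φ (β α)}.Infinite} with hΛdef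
  set D : Set ℝ := Set.range (fun α : J => R α ⟨0, hn⟩) with hDdef
  have hDnull : volume D = 0 := (Set.countable_range _).measure_zero _
  have hDmeas : MeasurableSet D := (Set.countable_range _).measurableSet
  set s : Set ℝ := I₀ \ Λ with hsdef
  have hs0 : volume s = 0 := by
    have hbes := Besicovitch.ae_tendsto_measure_inter_div (volume : Measure ℝ) s
    have hkey : ∀ x, x ∈ s → x ∈ interior I₀ →
        ¬ Tendsto (fun r => volume (s ∩ closedBall x r) / volume (closedBall x r))
          (𝓝[>] 0) (𝓝 1) := by
      intro x hxs hxint htend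
      have hxI₀ : x ∈ I₀ := hxs.1
      -- Lipschitz data around x
      have hlipk : ∀ k : Fin n, ∃ ε : ℝ, 0 < ε ∧ ∃ Kk : NNReal,
          ∀ y ∈ ball x ε ∩ I₀, ∀ z ∈ ball x ε ∩ I₀, |f k y - f k z| ≤ (Kk : ℝ) * |y - z| := by
        intro k
        obtain ⟨t, ht, Kk, hKk⟩ := hlip k x hxI₀
        obtain ⟨ε, hε0, hεsub⟩ := Metric.mem_nhdsWithin_iff.mp ht
        refine ⟨ε, hε0, Kk, fun y hy z hz => ?_⟩
        have h2 := hKk.dist_le_mul y (hεsub hy) z (hεsub hz)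
        rwa [Real.dist_eq, Real.dist_eq] at h2
      choose εf hεf Kf hKf using hlipk
      have hFinNe : Nonempty (Fin n) := ⟨⟨0, hn⟩⟩
      have huniv : (Finset.univ : Finset (Fin n)).Nonempty := Finset.univ_nonempty
      set ε : ℝ := Finset.univ.inf' huniv εf with hεdef
      have hε0 : 0 < ε := by
        rw [hεdef, Finset.lt_inf'_iff]
        exact fun k _ => hεf k
      set K : ℝ := 1 + ((Finset.univ.sup Kf : NNReal) : ℝ) with hKdef
      have hK1 : 1 ≤ K := by
        rw [hKdef]
        have : (0:ℝ) ≤ ((Finset.univ.sup Kf : NNReal) : ℝ) := NNReal.coe_nonneg _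
        linarith
      have hlipB : ∀ k : Fin n, ∀ y ∈ ball x ε ∩ I₀, ∀ z ∈ ball x ε ∩ I₀,
          |f k y - f k z| ≤ K * |y - z| := by
        intro k y hy z hz
        have hεk : ε ≤ εf k := Finset.inf'_le _ (Finset.mem_univ k)
        have hy' : y ∈ ball x (εf k) ∩ I₀ := ⟨ball_subset_ball hεk hy.1, hy.2⟩
        have hz' : z ∈ ball x (εf k) ∩ I₀ := ⟨ball_subset_ball hεk hz.1, hz.2⟩
        have h1 := hKf k y hy' z hz'
        have h2 : ((Kf k : NNReal) : ℝ) ≤ K := by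
          rw [hKdef]
          have := Finset.le_sup (f := Kf) (Finset.mem_univ k)
          have h3 : ((Kf k : NNReal) : ℝ) ≤ ((Finset.univ.sup Kf : NNReal) : ℝ) :=
            NNReal.coe_le_coe.mpr this
          linarith
        calc |f k y - f k z| ≤ (Kf k : ℝ) * |y - z| := h1
          _ ≤ K * |y - z| := mul_le_mul_of_nonneg_right h2 (abs_nonneg _)
      -- interior ball
      obtain ⟨ε₂, hε₂0, hε₂sub⟩ := Metric.mem_nhds_iff.mp (mem_interior_iff_mem_nhds.mp hxint)
      set ε₃ : ℝ := min ε ε₂ with hε₃def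
      have hε₃0 : 0 < ε₃ := lt_min hε0 hε₂0
      set cm : ℝ := min (min (κ / 2) (κ ^ 2 / 1792)) (1 / 2) with hcmdef
      have hcm0 : 0 < cm := by
        rw [hcmdef]
        apply lt_min (lt_min (by linarith) (by positivity)) (by norm_num)
      have hcm1 : cm ≤ 1 / 2 := min_le_right _ _
      -- the eventual density bound
      have hbound : ∀ᶠ r in 𝓝[>] (0:ℝ),
          volume (s ∩ closedBall x r) / volume (closedBall x r) ≤
            ENNReal.ofReal (1 - cm) := by
        filter_upwards [Ioo_mem_nhdsGT_of_mem (Set.left_mem_Ico.mpr hε₃0)] with r hr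
        obtain ⟨hr0, hrε₃⟩ := hr
        have hIccsub : Icc (x - r) (x + r) ⊆ ball x ε₃ := by
          intro y hy
          rw [mem_ball, Real.dist_eq, abs_sub_lt_iff]
          obtain ⟨h1, h2⟩ := hy
          constructor <;> linarith
        have hIccI₀ : Icc (x - r) (x + r) ⊆ I₀ :=
          fun y hy => hε₂sub (ball_subset_ball (min_le_right _ _) (hIccsub hy))
        have hIccball : Icc (x - r) (x + r) ⊆ ball x ε ∩ I₀ :=
          fun y hy => ⟨ball_subset_ball (min_le_left _ _) (hIccsub hy), hIccI₀ hy⟩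
        obtain ⟨M, hMmeas, hMsub, hMvol, hMwit⟩ := main_local J (fun α => R α ⟨0, hn⟩) β
          (fun α => ∀ k : Fin n, |f k (R α ⟨0, hn⟩) - R α k| < Φ (β α)) hJfin
          ρ hρpos hρ0 Ψ hΨpos hΨdec T hhalf hdiv K hK1
          (x - r) (x + r) (by linarith) κ hκ
          (hub (Icc (x - r) (x + r)) hIccI₀ Set.ordConnected_Icc)
        -- transfer: M \ D ⊆ Λ
        have htrans : M \ D ⊆ Λ := by
          rintro y ⟨hyM, hyD⟩
          rw [hΛdef]
          rw [Set.mem_setOf_eq]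
          by_contra hfin
          rw [Set.not_infinite] at hfin
          have hyIcc : y ∈ Icc (x - r) (x + r) := hMsub hyM
          have hcond : ∀ t : ℕ, ∀ α : J, β α ≤ 2 ^ t →
              (∀ k : Fin n, |f k (R α ⟨0, hn⟩) - R α k| < Φ (β α)) →
              R α ⟨0, hn⟩ ∈ Icc (x - r) (x + r) → |y - R α ⟨0, hn⟩| < Ψ (2 ^ t) / K →
              α ∈ {α : J |
                (∀ k : Fin n, |f k (R α ⟨0, hn⟩) - R α k| < Φ (β α)) ∧
                |y - R α ⟨0, hn⟩| < Ψ (β α) ∧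
                ∀ k : Fin n, k ≠ ⟨0, hn⟩ → |f k y - R α k| < Ψ (β α) + Φ (β α)} := by
            intro t α hβt hres hRIcc hclose
            have hβα := hβ α
            have hΨβ : 0 < Ψ (β α) := hΨpos _ hβα
            have hΨmono : Ψ (2 ^ t) ≤ Ψ (β α) := hΨdec _ _ hβα hβt
            have hK0 : (0:ℝ) < K := by linarith
            have h1 : |y - R α ⟨0, hn⟩| < Ψ (β α) := by
              have : Ψ (2 ^ t) / K ≤ Ψ (β α) / K := by gcongr
              have h2 : Ψ (β α) / K ≤ Ψ (β α) := div_le_self hΨβ.le hK1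
              linarith
            refine ⟨hres, h1, fun k _ => ?_⟩
            have hlipyk := hlipB k y (hIccball hyIcc) (R α ⟨0, hn⟩) (hIccball hRIcc)
            have h3 : |f k y - R α k| ≤ |f k y - f k (R α ⟨0, hn⟩)| + |f k (R α ⟨0, hn⟩) - R α k| := by
              calc |f k y - R α k| = |(f k y - f k (R α ⟨0, hn⟩)) + (f k (R α ⟨0, hn⟩) - R α k)| := by
                    ring_nf
                _ ≤ _ := abs_add_le _ _
            have h4 : K * |y - R α ⟨0, hn⟩| < K * (Ψ (2 ^ t) / K) :=
              mul_lt_mul_of_pos_left hclose hK0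
            have h5 : K * (Ψ (2 ^ t) / K) = Ψ (2 ^ t) := by field_simp
            have h6 := hres k
            calc |f k y - R α k| ≤ |f k y - f k (R α ⟨0, hn⟩)| + |f k (R α ⟨0, hn⟩) - R α k| := h3
              _ ≤ K * |y - R α ⟨0, hn⟩| + |f k (R α ⟨0, hn⟩) - R α k| := by linarith [hlipyk]
              _ < Ψ (2 ^ t) + Φ (β α) := by rw [← h5]; linarith
              _ ≤ Ψ (β α) + Φ (β α) := by linarith
          -- y is not a resonant first coordinate
          have hyne : ∀ α : J, y ≠ R α ⟨0, hn⟩ := by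
            intro α h
            exact hyD ⟨α, h.symm⟩
          -- the finite set is nonempty via a witness
          obtain ⟨t₀, _, α₀, hβ₀, hres₀, hRIcc₀, hclose₀⟩ := hMwit y hyM 0
          have hα₀mem := hcond t₀ α₀ hβ₀ hres₀ hRIcc₀ hclose₀
          obtain ⟨αm, hαm, hαmmin⟩ := Set.exists_min_image _ (fun α => |y - R α ⟨0, hn⟩|) hfin
            ⟨α₀, hα₀mem⟩
          set d : ℝ := |y - R αm ⟨0, hn⟩| with hddef
          have hd0 : 0 < d := by
            rw [hddef]
            rw [abs_pos, sub_ne_zero]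
            exact hyne αm
          have hK0 : (0:ℝ) < K := by linarith
          obtain ⟨m₅, hm₅⟩ := psi_small Ψ T hΨpos hΨdec hhalf (d * K) (by positivity)
          obtain ⟨t₁, ht₁m, α₁, hβ₁, hres₁, hRIcc₁, hclose₁⟩ := hMwit y hyM m₅
          have hα₁mem := hcond t₁ α₁ hβ₁ hres₁ hRIcc₁ hclose₁
          have h7 : d ≤ |y - R α₁ ⟨0, hn⟩| := hαmmin α₁ hα₁mem
          have h8 : Ψ (2 ^ t₁) < d * K := hm₅ t₁ ht₁m
          have h9 : Ψ (2 ^ t₁) / K < d := by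
            rw [div_lt_iff₀ hK0]
            linarith
          linarith
        -- measure estimate
        have hcb : volume (closedBall x r) = ENNReal.ofReal (2 * r) := by
          rw [Real.volume_closedBall]
        have hMcb : M ⊆ closedBall x r := by
          rw [Real.closedBall_eq_Icc]
          exact hMsub
        have hMD : volume (M \ D) = volume M := measure_diff_null hDnull
        have hMvol' : ENNReal.ofReal (cm * (2 * r)) ≤ volume (M \ D) := by
          rw [hMD]
          refine le_trans ?_ hMvol
          apply ENNReal.ofReal_le_ofReal
          have h1 : cm ≤ min (κ / 2) (κ ^ 2 / 1792) := min_le_left _ _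
          have h2 : x + r - (x - r) = 2 * r := by ring
          rw [h2]
          nlinarith
        have hssub : s ∩ closedBall x r ⊆ closedBall x r \ (M \ D) := by
          rintro y ⟨hys, hycb⟩
          refine ⟨hycb, fun hyMD => ?_⟩
          exact hys.2 (htrans hyMD)
        have hdiffvol : volume (closedBall x r \ (M \ D)) ≤ ENNReal.ofReal ((1 - cm) * (2 * r)) := by
          have h1 : volume (closedBall x r \ (M \ D)) =
              volume (closedBall x r) - volume (M \ D) := by
            apply measure_diff (Set.Subset.trans Set.diff_subset hMcb)
              ((hMmeas.diff hDmeas).nullMeasurableSet)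
            exact ne_of_lt (lt_of_le_of_lt (measure_mono (Set.Subset.trans Set.diff_subset hMcb))
              (by rw [hcb]; exact ENNReal.ofReal_lt_top))
          rw [h1, hcb]
          calc ENNReal.ofReal (2 * r) - volume (M \ D)
              ≤ ENNReal.ofReal (2 * r) - ENNReal.ofReal (cm * (2 * r)) :=
                tsub_le_tsub le_rfl hMvol'
            _ = ENNReal.ofReal (2 * r - cm * (2 * r)) := by
                rw [ENNReal.ofReal_sub _ (by positivity)]
            _ = ENNReal.ofReal ((1 - cm) * (2 * r)) := by ring_nf
        calc volume (s ∩ closedBall x r) / volume (closedBall x r)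
            ≤ ENNReal.ofReal ((1 - cm) * (2 * r)) / ENNReal.ofReal (2 * r) := by
              rw [hcb]
              exact ENNReal.div_le_div_right (le_trans (measure_mono hssub) hdiffvol) _
          _ = ENNReal.ofReal ((1 - cm) * (2 * r) / (2 * r)) := by
              rw [ENNReal.ofReal_div_of_pos (by linarith)]
          _ = ENNReal.ofReal (1 - cm) := by
              congr 1
              field_simp
        -- done with hbound
      have hle := le_of_tendsto htend hbound
      have hlt : ENNReal.ofReal (1 - cm) < 1 := by
        rw [ENNReal.ofReal_lt_one]
        linarith
      exact absurd hle (not_le.mpr hlt)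
    -- combine with Besicovitch
    have hbes0 : (volume.restrict s) {x : ℝ | ¬ Tendsto
        (fun r => volume (s ∩ closedBall x r) / volume (closedBall x r)) (𝓝[>] 0) (𝓝 1)} = 0 :=
      ae_iff.mp hbes
    have h1 : volume (s ∩ interior I₀) = 0 := by
      apply measure_mono_null (fun y hy => ?_) (le_antisymm (le_trans
        (MeasureTheory.Measure.le_restrict_apply _ _) (le_of_eq hbes0)) zero_le)
      exact ⟨hkey y hy.1 hy.2, hy.1⟩
    have h2 : volume (s \ interior I₀) = 0 := by
      rcases Set.eq_empty_or_nonempty I₀ with hI | hI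
      · have : s \ interior I₀ ⊆ (∅ : Set ℝ) := by
          rw [hsdef, hI]
          intro y hy
          exact hy.1.1
        exact measure_mono_null this measure_empty
      have hsub : I₀ \ interior I₀ ⊆ {sInf I₀, sSup I₀} := by
        intro z hz
        by_contra hznot
        simp only [Set.mem_insert_iff, Set.mem_singleton_iff, not_or] at hznot
        obtain ⟨h1', h2'⟩ := hznot
        have hzI := hz.1
        have hbddA := hI₀bdd.bddAbove
        have hbddB := hI₀bdd.bddBelow
        have hzi : sInf I₀ < z := lt_of_le_of_ne (csInf_le hbddB hzI) (Ne.symm h1')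
        have hzs : z < sSup I₀ := lt_of_le_of_ne (le_csSup hbddA hzI) h2'
        obtain ⟨p, hp, hpz⟩ : ∃ p ∈ I₀, p < z := by
          by_contra hc
          push_neg at hc
          exact absurd (le_csInf hI hc) (not_le.mpr hzi)
        obtain ⟨q, hq, hzq⟩ : ∃ q ∈ I₀, z < q := by
          by_contra hc
          push_neg at hc
          exact absurd (csSup_le hI hc) (not_le.mpr hzs)
        have hIoo : Ioo p q ⊆ I₀ := fun y hy => hI₀.out hp hq ⟨le_of_lt hy.1, le_of_lt hy.2⟩
        have : z ∈ interior I₀ := mem_interior.mpr ⟨Ioo p q, hIoo, isOpen_Ioo, hpz, hzq⟩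
        exact hz.2 this
      have hsub2 : s \ interior I₀ ⊆ ({sInf I₀, sSup I₀} : Set ℝ) :=
        fun y hy => hsub ⟨hy.1.1, hy.2⟩
      refine measure_mono_null hsub2 ?_
      exact (Set.countable_insert.mpr (Set.countable_singleton _)).measure_zero _
    refine le_antisymm ?_ zero_le
    calc volume s ≤ volume ((s ∩ interior I₀) ∪ (s \ interior I₀)) := by
          apply measure_mono
          intro y hy
          by_cases hc : y ∈ interior I₀
          · exact Set.mem_union_left _ ⟨hy, hc⟩
          · exact Set.mem_union_right _ ⟨hy, hc⟩
      _ ≤ volume (s ∩ interior I₀) + volume (s \ interior I₀) := measure_union_le _ _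
      _ = 0 := by rw [h1, h2, add_zero]
  -- conclude full measure
  have hfinal : volume I₀ ≤ volume (I₀ ∩ Λ) := by
    calc volume I₀ ≤ volume ((I₀ ∩ Λ) ∪ s) := by
          apply measure_mono
          intro y hy
          by_cases hc : y ∈ Λ
          · exact Set.mem_union_left _ ⟨hy, hc⟩
          · exact Set.mem_union_right _ ⟨hy, hc⟩
      _ ≤ volume (I₀ ∩ Λ) + volume s := measure_union_le _ _
      _ = volume (I₀ ∩ Λ) := by rw [hs0, add_zero]
  have heq : {x ∈ I₀ | {α : J |
      (∀ k : Fin n, |f k (R α ⟨0, hn⟩) - R α k| < Φ (β α)) ∧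
      |x - R α ⟨0, hn⟩| < Ψ (β α) ∧
      ∀ k : Fin n, k ≠ ⟨0, hn⟩ → |f k x - R α k| < Ψ (β α) + Φ (β α)}.Infinite} = I₀ ∩ Λ := by
    ext y
    simp only [Set.mem_setOf_eq, Set.mem_inter_iff, hΛdef]
  rw [heq]
  exact le_antisymm (measure_mono Set.inter_subset_left) hfinal
end

section
/- Let 0 < ε < 1/2 and let C₁^ε := {(x, y) ∈ ℝ² : x² + y² = 1, ε < x < 1 − ε, ε < y < 1 − ε} be the corresponding arc of the unit circle. Then there exists a constant K = K(ε) > 0 such that for all a, b ∈ ℝ and all δ₁, δ₂ > 0, the one-dimensional Hausdorff measure of C₁^ε ∩ ((a − δ₁, a + δ₁) × (b − δ₂, b + δ₂)) is at most K · min(δ₁, δ₂). -/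
open MeasureTheory Filter Set
open scoped ENNReal NNReal

lemma lip_aux (ε : ℝ) (hε : 0 < ε) (hε2 : ε < 1 / 2) :
    LipschitzOnWith (Real.toNNReal (1 / Real.sqrt ε))
      (fun x : ℝ => Real.sqrt (1 - x ^ 2)) (Icc ε (1 - ε)) := by
  have hs : 0 < Real.sqrt ε := Real.sqrt_pos.2 hε
  apply LipschitzOnWith.of_dist_le'
  intro x hx y hy
  set s := Real.sqrt ε
  set u := Real.sqrt (1 - x ^ 2) with hu
  set v := Real.sqrt (1 - y ^ 2) with hv
  have hx1 : ε ≤ x := hx.1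
  have hx2 : x ≤ 1 - ε := hx.2
  have hy1 : ε ≤ y := hy.1
  have hy2 : y ≤ 1 - ε := hy.2
  have hxe : ε ≤ 1 - x ^ 2 := by nlinarith
  have hye : ε ≤ 1 - y ^ 2 := by nlinarith
  have hu2 : u ^ 2 = 1 - x ^ 2 := Real.sq_sqrt (by linarith)
  have hv2 : v ^ 2 = 1 - y ^ 2 := Real.sq_sqrt (by linarith)
  have hus : s ≤ u := Real.sqrt_le_sqrt hxe
  have hvs : s ≤ v := Real.sqrt_le_sqrt hye
  rw [Real.dist_eq, Real.dist_eq]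
  have habs2 : |x + y| ≤ 2 := abs_le.2 ⟨by linarith, by linarith⟩
  have key : |u - v| * (2 * s) ≤ 2 * |x - y| := by
    have heq : (u - v) * (u + v) = (y - x) * (y + x) := by nlinarith [hu2, hv2]
    calc |u - v| * (2 * s) ≤ |u - v| * (u + v) := by
          apply mul_le_mul_of_nonneg_left (by linarith) (abs_nonneg _)
      _ = |(u - v) * (u + v)| := by
          rw [abs_mul, abs_of_nonneg (by linarith : (0:ℝ) ≤ u + v)]
      _ = |x - y| * |x + y| := by
          rw [heq, abs_mul, abs_sub_comm y x, add_comm y x]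
      _ ≤ |x - y| * 2 := mul_le_mul_of_nonneg_left habs2 (abs_nonneg _)
      _ = 2 * |x - y| := by ring
  have h1s : (1 / s) * |x - y| = |x - y| / s := by ring
  rw [h1s, le_div_iff₀ hs]
  linarith

lemma aux1 (ε a δ : ℝ) (hε : 0 < ε) (hε2 : ε < 1 / 2) (hδ : 0 < δ) :
    μH[1] ({p : ℝ × ℝ | p.1 ^ 2 + p.2 ^ 2 = 1 ∧
        p.1 ∈ Ioo ε (1 - ε) ∧ p.2 ∈ Ioo ε (1 - ε)} ∩ {p | p.1 ∈ Ioo (a - δ) (a + δ)}) ≤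
    ENNReal.ofReal ((2 / Real.sqrt ε) * δ) := by
  have hs : 0 < Real.sqrt ε := Real.sqrt_pos.2 hε
  have hs1 : Real.sqrt ε ≤ 1 := Real.sqrt_le_one.2 (by linarith)
  set g : ℝ → ℝ := fun x => Real.sqrt (1 - x ^ 2) with hg
  set f : ℝ → ℝ × ℝ := fun x => (x, g x) with hf
  set t : Set ℝ := Icc ε (1 - ε) ∩ Ioo (a - δ) (a + δ) with ht
  have h1s : (1 : ℝ) ≤ 1 / Real.sqrt ε := by rw [le_div_iff₀ hs]; linarith
  have hlipg := lip_aux ε hε hε2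
  have hlip : LipschitzOnWith (Real.toNNReal (1 / Real.sqrt ε)) f (Icc ε (1 - ε)) := by
    apply LipschitzOnWith.of_dist_le'
    intro x hx y hy
    rw [Prod.dist_eq]
    apply max_le
    · exact le_mul_of_one_le_left dist_nonneg h1s
    · have := lipschitzOnWith_iff_dist_le_mul.1 hlipg x hx y hy
      refine this.trans ?_
      gcongr
      exact le_of_eq (Real.coe_toNNReal _ (by positivity))
  have hsub : ({p : ℝ × ℝ | p.1 ^ 2 + p.2 ^ 2 = 1 ∧
      p.1 ∈ Ioo ε (1 - ε) ∧ p.2 ∈ Ioo ε (1 - ε)} ∩ {p | p.1 ∈ Ioo (a - δ) (a + δ)}) ⊆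
      f '' t := by
    rintro ⟨x, y⟩ ⟨⟨hcirc, hx, hy⟩, hslab⟩
    refine ⟨x, ⟨⟨hx.1.le, hx.2.le⟩, hslab⟩, ?_⟩
    have hgy : g x = y := by
      rw [hg]
      simp only
      rw [show (1 : ℝ) - x ^ 2 = y ^ 2 by linarith [hcirc]]
      exact Real.sqrt_sq (by linarith [hy.1] : (0:ℝ) ≤ y)
    rw [hf]
    simp [hgy]
  calc μH[1] ({p : ℝ × ℝ | p.1 ^ 2 + p.2 ^ 2 = 1 ∧
        p.1 ∈ Ioo ε (1 - ε) ∧ p.2 ∈ Ioo ε (1 - ε)} ∩ {p | p.1 ∈ Ioo (a - δ) (a + δ)})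
      ≤ μH[1] (f '' t) := measure_mono hsub
    _ ≤ (↑(Real.toNNReal (1 / Real.sqrt ε)) : ℝ≥0∞) ^ (1 : ℝ) * μH[1] t :=
        (hlip.mono inter_subset_left).hausdorffMeasure_image_le zero_le_one
    _ ≤ (↑(Real.toNNReal (1 / Real.sqrt ε)) : ℝ≥0∞) ^ (1 : ℝ) *
          μH[1] (Ioo (a - δ) (a + δ)) := by
        exact mul_le_mul_right (measure_mono inter_subset_right) _
    _ = ENNReal.ofReal (1 / Real.sqrt ε) * ENNReal.ofReal (2 * δ) := by
        rw [ENNReal.rpow_one, MeasureTheory.hausdorffMeasure_real, Real.volume_Ioo]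
        congr 1
        ring
    _ = ENNReal.ofReal ((2 / Real.sqrt ε) * δ) := by
        rw [← ENNReal.ofReal_mul (by positivity)]
        congr 1
        ring
    _ ≤ ENNReal.ofReal ((2 / Real.sqrt ε) * δ) := le_refl _


lemma aux2 (ε b δ : ℝ) (hε : 0 < ε) (hε2 : ε < 1 / 2) (hδ : 0 < δ) :
    μH[1] ({p : ℝ × ℝ | p.1 ^ 2 + p.2 ^ 2 = 1 ∧
        p.1 ∈ Ioo ε (1 - ε) ∧ p.2 ∈ Ioo ε (1 - ε)} ∩ {p | p.2 ∈ Ioo (b - δ) (b + δ)}) ≤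
    ENNReal.ofReal ((2 / Real.sqrt ε) * δ) := by
  have hs : 0 < Real.sqrt ε := Real.sqrt_pos.2 hε
  have hs1 : Real.sqrt ε ≤ 1 := Real.sqrt_le_one.2 (by linarith)
  set g : ℝ → ℝ := fun x => Real.sqrt (1 - x ^ 2) with hg
  set f : ℝ → ℝ × ℝ := fun y => (g y, y) with hf
  set t : Set ℝ := Icc ε (1 - ε) ∩ Ioo (b - δ) (b + δ) with ht
  have h1s : (1 : ℝ) ≤ 1 / Real.sqrt ε := by rw [le_div_iff₀ hs]; linarith
  have hlipg := lip_aux ε hε hε2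
  have hlip : LipschitzOnWith (Real.toNNReal (1 / Real.sqrt ε)) f (Icc ε (1 - ε)) := by
    apply LipschitzOnWith.of_dist_le'
    intro x hx y hy
    rw [Prod.dist_eq]
    apply max_le
    · have := lipschitzOnWith_iff_dist_le_mul.1 hlipg x hx y hy
      refine this.trans ?_
      gcongr
      exact le_of_eq (Real.coe_toNNReal _ (by positivity))
    · exact le_mul_of_one_le_left dist_nonneg h1s
  have hsub : ({p : ℝ × ℝ | p.1 ^ 2 + p.2 ^ 2 = 1 ∧
      p.1 ∈ Ioo ε (1 - ε) ∧ p.2 ∈ Ioo ε (1 - ε)} ∩ {p | p.2 ∈ Ioo (b - δ) (b + δ)}) ⊆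
      f '' t := by
    rintro ⟨x, y⟩ ⟨⟨hcirc, hx, hy⟩, hslab⟩
    refine ⟨y, ⟨⟨hy.1.le, hy.2.le⟩, hslab⟩, ?_⟩
    have hgy : g y = x := by
      rw [hg]
      simp only
      rw [show (1 : ℝ) - y ^ 2 = x ^ 2 by linarith [hcirc]]
      exact Real.sqrt_sq (by linarith [hx.1] : (0:ℝ) ≤ x)
    rw [hf]
    simp [hgy]
  calc μH[1] ({p : ℝ × ℝ | p.1 ^ 2 + p.2 ^ 2 = 1 ∧
        p.1 ∈ Ioo ε (1 - ε) ∧ p.2 ∈ Ioo ε (1 - ε)} ∩ {p | p.2 ∈ Ioo (b - δ) (b + δ)})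
      ≤ μH[1] (f '' t) := measure_mono hsub
    _ ≤ (↑(Real.toNNReal (1 / Real.sqrt ε)) : ℝ≥0∞) ^ (1 : ℝ) * μH[1] t :=
        (hlip.mono inter_subset_left).hausdorffMeasure_image_le zero_le_one
    _ ≤ (↑(Real.toNNReal (1 / Real.sqrt ε)) : ℝ≥0∞) ^ (1 : ℝ) *
          μH[1] (Ioo (b - δ) (b + δ)) := by
        exact mul_le_mul_right (measure_mono inter_subset_right) _
    _ = ENNReal.ofReal (1 / Real.sqrt ε) * ENNReal.ofReal (2 * δ) := by
        rw [ENNReal.rpow_one, MeasureTheory.hausdorffMeasure_real, Real.volume_Ioo]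
        congr 1
        ring
    _ = ENNReal.ofReal ((2 / Real.sqrt ε) * δ) := by
        rw [← ENNReal.ofReal_mul (by positivity)]
        congr 1
        ring
    _ ≤ ENNReal.ofReal ((2 / Real.sqrt ε) * δ) := le_refl _

theorem statement17
    (ε : ℝ) (hε : 0 < ε) (hε2 : ε < 1 / 2) :
    ∃ K : ℝ, 0 < K ∧ ∀ a b δ₁ δ₂ : ℝ, 0 < δ₁ → 0 < δ₂ →
      μH[1] ({p : ℝ × ℝ | p.1 ^ 2 + p.2 ^ 2 = 1 ∧
          p.1 ∈ Ioo ε (1 - ε) ∧ p.2 ∈ Ioo ε (1 - ε)} ∩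
        (Ioo (a - δ₁) (a + δ₁) ×ˢ Ioo (b - δ₂) (b + δ₂))) ≤
      ENNReal.ofReal (K * min δ₁ δ₂) := by
  refine ⟨2 / Real.sqrt ε, by positivity, ?_⟩
  intro a b δ₁ δ₂ h1 h2
  rcases le_total δ₁ δ₂ with h | h
  · rw [min_eq_left h]
    refine le_trans (measure_mono ?_) (aux1 ε a δ₁ hε hε2 h1)
    rintro p ⟨hp, hrect⟩
    exact ⟨hp, hrect.1⟩
  · rw [min_eq_right h]
    refine le_trans (measure_mono ?_) (aux2 ε b δ₂ hε hε2 h2)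
    rintro p ⟨hp, hrect⟩
    exact ⟨hp, hrect.2⟩
end
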